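/- Let P be a group, β, s ∈ P with elements s_k defined by s₁ = s and s_{k+1} = [s_k, β]. Suppose the subgroup generated by all s_k (k ≥ 1) is abelian and β has order p. Then for 1 ≤ k ≤ p, conjugation satisfies s_k^{β^{1−k}} = ∏_{i=k}^{p+1} s_i^{C(p+1−k, i−k)}. -/

import Mathlib

open Finset

private lemma binom_aux {G : Type*} [CommGroup G] (u : ℕ → G) (n : ℕ) :
    ∏ j ∈ range (n + 1), (u j * u (j + 1)) ^ n.choose j
      = ∏ j ∈ range (n + 2), u j ^ (n + 1).choose j := by
  have h1 : ∏ j ∈ range (n+1), (u j * u (j+1)) ^ n.choose j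
      = (∏ j ∈ range (n+1), u j ^ n.choose j) * ∏ j ∈ range (n+1), u (j+1) ^ n.choose j := by
    rw [← prod_mul_distrib]; exact prod_congr rfl fun j _ => mul_pow _ _ _
  have h2 : ∏ j ∈ range (n + 2), u j ^ (n+1).choose j
      = (∏ j ∈ range (n+1), u (j+1) ^ (n+1).choose (j+1)) * u 0 := by
    rw [prod_range_succ']; simp
  have h4 : ∏ j ∈ range (n+1), u (j+1) ^ (n+1).choose (j+1)
      = (∏ j ∈ range (n+1), u (j+1) ^ n.choose j)
        * ∏ j ∈ range (n+1), u (j+1) ^ n.choose (j+1) := by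
    rw [← prod_mul_distrib]
    exact prod_congr rfl fun j _ => by rw [Nat.choose_succ_succ, pow_add]
  have h5 : (∏ j ∈ range (n+1), u (j+1) ^ n.choose (j+1)) * u 0
      = ∏ j ∈ range (n+1), u j ^ n.choose j := by
    have h := prod_range_succ' (fun j => u j ^ n.choose j) (n+1)
    rw [prod_range_succ] at h
    simp only [Nat.choose_succ_self, pow_zero, mul_one, Nat.choose_zero_right, pow_one] at h
    exact h.symm
  rw [h1, h2, h4, mul_assoc, h5, mul_comm]

theorem stmt_13 (p : ℕ) (hp : p.Prime) (hodd : Odd p)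
    {P : Type*} [Group P] (β : P) (hβ : orderOf β = p)
    (s : ℕ → P) (hrec : ∀ k : ℕ, 1 ≤ k → s (k + 1) = (s k)⁻¹ * β⁻¹ * s k * β)
    (hcomm : ∀ i j : ℕ, Commute (s i) (s j)) :
    ∀ k : ℕ, 1 ≤ k → k ≤ p →
      (β ^ ((1 : ℤ) - (k : ℤ)))⁻¹ * s k * β ^ ((1 : ℤ) - (k : ℤ))
        = Finset.noncommProd (Finset.Icc k (p + 1))
            (fun i => s i ^ ((p + 1 - k).choose (i - k)))
            (fun i _ j _ _ => (hcomm i j).pow_pow _ _) := by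
  classical
  set H := Subgroup.closure (Set.range s) with hH
  letI : CommGroup H := Subgroup.closureCommGroupOfComm
    (fun x hx y hy => by
      obtain ⟨i, rfl⟩ := hx; obtain ⟨j, rfl⟩ := hy; exact hcomm i j)
  set t : ℕ → H := fun i => ⟨s i, Subgroup.subset_closure ⟨i, rfl⟩⟩ with ht
  have hcoe_mul : ∀ a b : H, ((a * b : H) : P) = (a : P) * (b : P) := fun _ _ => rfl
  have hcoe_pow : ∀ (a : H) (n : ℕ), ((a ^ n : H) : P) = (a : P) ^ n := fun _ _ => rfl
  have hcoe_one : ((1 : H) : P) = 1 := rfl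
  have hcoe_t : ∀ i, ((t i : H) : P) = s i := fun _ => rfl
  have hconj : ∀ i, 1 ≤ i → β⁻¹ * s i * β = s i * s (i + 1) := by
    intro i hi; rw [hrec i hi]; group
  -- noncommProd equals the product inside H
  have hncp : ∀ (F : Finset ℕ) (e : ℕ → ℕ),
      Finset.noncommProd F (fun i => s i ^ e i)
        (fun i _ j _ _ => (hcomm i j).pow_pow _ _)
      = ((∏ i ∈ F, t i ^ e i : H) : P) := by
    intro F e
    induction F using Finset.induction with
    | empty => exact Finset.noncommProd_empty _ _
    | @insert _ _ ha ih =>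
      refine (Finset.noncommProd_insert_of_notMem _ _ _ _ ha).trans ?_
      rw [Finset.prod_insert ha, ih]
      rfl
  -- conjugation of a product
  have hcp : ∀ (F : Finset ℕ) (e : ℕ → ℕ), (∀ i ∈ F, 1 ≤ i) →
      β⁻¹ * ((∏ i ∈ F, t i ^ e i : H) : P) * β
      = ((∏ i ∈ F, (t i * t (i + 1)) ^ e i : H) : P) := by
    intro F e hF
    induction F using Finset.induction with
    | empty => simp [hcoe_one]
    | @insert a F ha ih =>
      rw [Finset.prod_insert ha, Finset.prod_insert ha]
      show β⁻¹ * ((s a ^ e a) * ((∏ i ∈ F, t i ^ e i : H) : P)) * β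
          = (s a * s (a + 1)) ^ e a * ((∏ i ∈ F, (t i * t (i + 1)) ^ e i : H) : P)
      have h1 : β⁻¹ * s a ^ e a * β = (s a * s (a + 1)) ^ e a := by
        rw [← hconj a (hF a (Finset.mem_insert_self a F))]
        have h := conj_pow (i := e a) (a := β⁻¹) (b := s a)
        rw [inv_inv] at h
        exact h.symm
      calc β⁻¹ * ((s a ^ e a) * ((∏ i ∈ F, t i ^ e i : H) : P)) * β
          = (β⁻¹ * (s a ^ e a) * β) * (β⁻¹ * ((∏ i ∈ F, t i ^ e i : H) : P) * β) := by group
        _ = _ := by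
            rw [h1, ih (fun i hi => hF i (Finset.mem_insert_of_mem hi))]
  -- key induction
  have key : ∀ n k : ℕ, 1 ≤ k → (β ^ n)⁻¹ * s k * β ^ n
      = ((∏ i ∈ Icc k (k + n), t i ^ (n.choose (i - k)) : H) : P) := by
    intro n
    induction n with
    | zero =>
      intro k hk
      simp [ht]
    | succ n ih =>
      intro k hk
      have step : (β ^ (n+1))⁻¹ * s k * β ^ (n+1)
          = β⁻¹ * ((β ^ n)⁻¹ * s k * β ^ n) * β := by
        rw [pow_succ]; group
      have hb2 : (∏ i ∈ Icc k (k + n), (t i * t (i + 1)) ^ (n.choose (i - k)) : H)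
          = ∏ i ∈ Icc k (k + (n + 1)), t i ^ ((n + 1).choose (i - k)) := by
        have e1 : ∀ m : ℕ, Icc k (k + m) = Ico k (k + m + 1) :=
          fun m => (Finset.Ico_add_one_right_eq_Icc k (k + m))
        rw [e1 n, e1 (n + 1), prod_Ico_eq_prod_range, prod_Ico_eq_prod_range]
        simp only [add_tsub_cancel_left]
        have h1 : k + n + 1 - k = n + 1 := by omega
        have h2 : k + (n + 1) + 1 - k = n + 2 := by omega
        rw [h1, h2]
        exact binom_aux (fun j => t (k + j)) n
      rw [step, ih k hk, hcp _ _ (fun i hi => le_trans hk (Finset.mem_Icc.mp hi).1), hb2]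
  -- finish
  intro k hk1 hkp
  have hz : β ^ ((1 : ℤ) - (k : ℤ)) = β ^ (p + 1 - k : ℕ) := by
    have hc : ((p + 1 - k : ℕ) : ℤ) = ((1 : ℤ) - k) + p := by
      have : k ≤ p + 1 := by omega
      push_cast [this]; ring
    rw [← zpow_natCast, hc, zpow_add, zpow_natCast, ← hβ, pow_orderOf_eq_one, mul_one]
  have hicc : k + (p + 1 - k) = p + 1 := by omega
  rw [hz, ← zpow_natCast β (p + 1 - k)]
  rw [zpow_natCast, key (p + 1 - k) k hk1, hicc, hncp]
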